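/- arXiv:1806.07648 — 2 statements merged into one kernel-verified Lean document; each statement's English description precedes it below -/
import Mathlib

section
/- Let Q be the degree-6 polynomial 2³ · det M(k)/(2!·4!·6!) with M(k) the 3×3 Verlinde matrix for g = 3. Then every complex root of Q has real part lying in the interval [-12/7, -2/7]. -/
/-- The genus-`g` Verlinde matrix over ℂ: `M_{0,s} = 1` and
`M_{r,s} = (k+1+r)^{2s+2} - (k+1-r)^{2s+2}` for `r ≥ 1`. -/
def verlindeMatrix (g : ℕ) (k : ℂ) : Matrix (Fin g) (Fin g) ℂ :=
  fun r s => if (r : ℕ) = 0 then 1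
    else (k + 1 + (r : ℕ)) ^ (2 * (s : ℕ) + 2) - (k + 1 - (r : ℕ)) ^ (2 * (s : ℕ) + 2)

/-- `Q(k) = 2^g det M(k) / ∏_{j=1}^g (2j)!`, the Verlinde/Hilbert polynomial of the
genus-`g` moduli space `M_C(2,L)`, viewed as a function on ℂ. -/
noncomputable def Q (g : ℕ) (k : ℂ) : ℂ :=
  2 ^ g * (verlindeMatrix g k).det /
    (∏ j ∈ Finset.Icc 1 g, (Nat.factorial (2 * j) : ℂ))

lemma Qval (z : ℂ) : Q 3 z = ((z+1)^2 * (14*(z+1)^4 + 20*(z+1)^2 + 11)) / 45 := by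
  have hprod : (∏ j ∈ Finset.Icc 1 3, (Nat.factorial (2 * j) : ℂ)) = 34560 := by
    show (∏ j ∈ Finset.Icc 1 3, (Nat.factorial (2 * j) : ℂ)) = 34560
    rw [show Finset.Icc 1 3 = {1, 2, 3} from rfl]
    norm_num [Nat.factorial]
  have hdet : (verlindeMatrix 3 z).det =
      ((z+1)^2 * (14*(z+1)^4 + 20*(z+1)^2 + 11)) * 96 := by
    rw [Matrix.det_fin_three]
    simp only [verlindeMatrix]
    norm_num
    ring
  rw [Q, hprod, hdet]
  ring

theorem genus_three_narrow_canonical_strip :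
    ∀ z : ℂ, Q 3 z = 0 → z.re ∈ Set.Icc (-12 / 7 : ℝ) (-2 / 7 : ℝ) := by
  intro z hQ
  rw [Qval] at hQ
  have h0 : (z+1)^2 * (14*(z+1)^4 + 20*(z+1)^2 + 11) = 0 := by
    field_simp at hQ; linear_combination hQ
  rcases mul_eq_zero.mp h0 with h1 | h2
  · have hz : z = -1 := by
      have := pow_eq_zero_iff (n := 2) (by norm_num) |>.mp h1
      linear_combination this
    rw [hz]
    constructor <;> norm_num
  · -- w = (z+1)^2 satisfies 14 w^2 + 20 w + 11 = 0
    have h2' : 14*((z+1)^2)^2 + 20*(z+1)^2 + 11 = 0 := by linear_combination h2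
    set w : ℂ := (z+1)^2 with hw
    have hw2 : 14*w^2 + 20*w + 11 = 0 := h2'
    set a : ℝ := w.re
    set b : ℝ := w.im
    have hre : 14*(a^2 - b^2) + 20*a + 11 = 0 := by
      have := congrArg Complex.re hw2
      simpa [Complex.add_re, Complex.mul_re, Complex.mul_im, pow_two] using this
    have him : b * (28*a + 20) = 0 := by
      have := congrArg Complex.im hw2
      simp [Complex.add_im, Complex.mul_re, Complex.mul_im, pow_two] at this
      nlinarith [this]
    set u : ℝ := z.re + 1
    set v : ℝ := z.im
    have hau : a = u^2 - v^2 := by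
      simp only [a, hw, pow_two, Complex.mul_re, Complex.add_re, Complex.add_im,
        Complex.one_re, Complex.one_im, u, v]
      ring
    have hbu : b = 2*u*v := by
      simp only [b, hw, pow_two, Complex.mul_im, Complex.add_re, Complex.add_im,
        Complex.one_re, Complex.one_im, u, v]
      ring
    rcases mul_eq_zero.mp him with hb0 | ha0
    · exfalso; nlinarith [sq_nonneg (a + 5/7), hre, hb0]
    · -- a = -5/7, then b^2 = 27/98, and 4 u^2 v^2 = 27/98 with v^2 = u^2 + 5/7
      have ha : a = -5/7 := by linarith
      have hb2 : b^2 = 27/98 := by nlinarith [hre, ha]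
      have hv2 : v^2 = u^2 + 5/7 := by
        have h := ha; rw [hau] at h; linarith
      have huv : 4*u^2*(u^2 + 5/7) = 27/98 := by
        have : (2*u*v)^2 = 27/98 := by rw [← hbu]; exact hb2
        nlinarith [this, hv2]
      have hu2 : u^2 ≤ 25/49 := by nlinarith [sq_nonneg u, huv]
      have h5 : -(5/7) ≤ u ∧ u ≤ 5/7 := abs_le.mp (by
        rw [show (5/7 : ℝ) = Real.sqrt (25/49) by
          rw [show (25/49:ℝ) = (5/7)^2 by norm_num, Real.sqrt_sq (by norm_num)]]
        exact Real.abs_le_sqrt (by simpa [sq_abs] using hu2))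
      constructor
      · simp only [u] at h5; linarith [h5.1]
      · simp only [u] at h5; linarith [h5.2]
end

section
/- Let Q be the degree-12 polynomial 2^5 · det M(k)/∏_{j=1}^{5}(2j)!, where M(k) is the 5 × 5 matrix with M_{0,s} = 1 and M_{r,s} = (k+1+r)^{2s+2} - (k+1-r)^{2s+2} for 1 ≤ r ≤ 4, 0 ≤ s ≤ 4. Then every complex root of Q has real part lying in the closed interval [-2, 0]. -/
set_option maxHeartbeats 4000000


lemma vSA3_0_0 : ((0:Fin 3).succAbove (0:Fin 2)) = 1 := rfl
lemma vSA3_0_1 : ((0:Fin 3).succAbove (1:Fin 2)) = 2 := rfl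
lemma vSA3_1_0 : ((1:Fin 3).succAbove (0:Fin 2)) = 0 := rfl
lemma vSA3_1_1 : ((1:Fin 3).succAbove (1:Fin 2)) = 2 := rfl
lemma vSA3_2_0 : ((2:Fin 3).succAbove (0:Fin 2)) = 0 := rfl
lemma vSA3_2_1 : ((2:Fin 3).succAbove (1:Fin 2)) = 1 := rfl
lemma vSA4_0_0 : ((0:Fin 4).succAbove (0:Fin 3)) = 1 := rfl
lemma vSA4_0_1 : ((0:Fin 4).succAbove (1:Fin 3)) = 2 := rfl
lemma vSA4_0_2 : ((0:Fin 4).succAbove (2:Fin 3)) = 3 := rfl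
lemma vSA4_1_0 : ((1:Fin 4).succAbove (0:Fin 3)) = 0 := rfl
lemma vSA4_1_1 : ((1:Fin 4).succAbove (1:Fin 3)) = 2 := rfl
lemma vSA4_1_2 : ((1:Fin 4).succAbove (2:Fin 3)) = 3 := rfl
lemma vSA4_2_0 : ((2:Fin 4).succAbove (0:Fin 3)) = 0 := rfl
lemma vSA4_2_1 : ((2:Fin 4).succAbove (1:Fin 3)) = 1 := rfl
lemma vSA4_2_2 : ((2:Fin 4).succAbove (2:Fin 3)) = 3 := rfl
lemma vSA4_3_0 : ((3:Fin 4).succAbove (0:Fin 3)) = 0 := rfl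
lemma vSA4_3_1 : ((3:Fin 4).succAbove (1:Fin 3)) = 1 := rfl
lemma vSA4_3_2 : ((3:Fin 4).succAbove (2:Fin 3)) = 2 := rfl
lemma vSA5_0_0 : ((0:Fin 5).succAbove (0:Fin 4)) = 1 := rfl
lemma vSA5_0_1 : ((0:Fin 5).succAbove (1:Fin 4)) = 2 := rfl
lemma vSA5_0_2 : ((0:Fin 5).succAbove (2:Fin 4)) = 3 := rfl
lemma vSA5_0_3 : ((0:Fin 5).succAbove (3:Fin 4)) = 4 := rfl
lemma vSA5_1_0 : ((1:Fin 5).succAbove (0:Fin 4)) = 0 := rfl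
lemma vSA5_1_1 : ((1:Fin 5).succAbove (1:Fin 4)) = 2 := rfl
lemma vSA5_1_2 : ((1:Fin 5).succAbove (2:Fin 4)) = 3 := rfl
lemma vSA5_1_3 : ((1:Fin 5).succAbove (3:Fin 4)) = 4 := rfl
lemma vSA5_2_0 : ((2:Fin 5).succAbove (0:Fin 4)) = 0 := rfl
lemma vSA5_2_1 : ((2:Fin 5).succAbove (1:Fin 4)) = 1 := rfl
lemma vSA5_2_2 : ((2:Fin 5).succAbove (2:Fin 4)) = 3 := rfl
lemma vSA5_2_3 : ((2:Fin 5).succAbove (3:Fin 4)) = 4 := rfl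
lemma vSA5_3_0 : ((3:Fin 5).succAbove (0:Fin 4)) = 0 := rfl
lemma vSA5_3_1 : ((3:Fin 5).succAbove (1:Fin 4)) = 1 := rfl
lemma vSA5_3_2 : ((3:Fin 5).succAbove (2:Fin 4)) = 2 := rfl
lemma vSA5_3_3 : ((3:Fin 5).succAbove (3:Fin 4)) = 4 := rfl
lemma vSA5_4_0 : ((4:Fin 5).succAbove (0:Fin 4)) = 0 := rfl
lemma vSA5_4_1 : ((4:Fin 5).succAbove (1:Fin 4)) = 1 := rfl
lemma vSA5_4_2 : ((4:Fin 5).succAbove (2:Fin 4)) = 2 := rfl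
lemma vSA5_4_3 : ((4:Fin 5).succAbove (3:Fin 4)) = 3 := rfl
lemma vFS2_0 : (Fin.succ (0:Fin 2)) = 1 := rfl
lemma vFS2_1 : (Fin.succ (1:Fin 2)) = 2 := rfl
lemma vFS3_0 : (Fin.succ (0:Fin 3)) = 1 := rfl
lemma vFS3_1 : (Fin.succ (1:Fin 3)) = 2 := rfl
lemma vFS3_2 : (Fin.succ (2:Fin 3)) = 3 := rfl
lemma vFS4_0 : (Fin.succ (0:Fin 4)) = 1 := rfl
lemma vFS4_1 : (Fin.succ (1:Fin 4)) = 2 := rfl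
lemma vFS4_2 : (Fin.succ (2:Fin 4)) = 3 := rfl
lemma vFS4_3 : (Fin.succ (3:Fin 4)) = 4 := rfl

lemma detFinFour' (A : Matrix (Fin 4) (Fin 4) ℂ) : A.det = A 0 0*A 1 1*A 2 2*A 3 3 - A 0 0*A 1 1*A 2 3*A 3 2 - A 0 0*A 1 2*A 2 1*A 3 3 + A 0 0*A 1 2*A 2 3*A 3 1 + A 0 0*A 1 3*A 2 1*A 3 2 - A 0 0*A 1 3*A 2 2*A 3 1 - A 0 1*A 1 0*A 2 2*A 3 3 + A 0 1*A 1 0*A 2 3*A 3 2 + A 0 1*A 1 2*A 2 0*A 3 3 - A 0 1*A 1 2*A 2 3*A 3 0 - A 0 1*A 1 3*A 2 0*A 3 2 + A 0 1*A 1 3*A 2 2*A 3 0 + A 0 2*A 1 0*A 2 1*A 3 3 - A 0 2*A 1 0*A 2 3*A 3 1 - A 0 2*A 1 1*A 2 0*A 3 3 + A 0 2*A 1 1*A 2 3*A 3 0 + A 0 2*A 1 3*A 2 0*A 3 1 - A 0 2*A 1 3*A 2 1*A 3 0 - A 0 3*A 1 0*A 2 1*A 3 2 + A 0 3*A 1 0*A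 2 2*A 3 1 + A 0 3*A 1 1*A 2 0*A 3 2 - A 0 3*A 1 1*A 2 2*A 3 0 - A 0 3*A 1 2*A 2 0*A 3 1 + A 0 3*A 1 2*A 2 1*A 3 0 := by
  rw [Matrix.det_succ_row_zero]
  simp [Fin.sum_univ_succ, Matrix.det_fin_three, Matrix.submatrix_apply, vSA3_0_0, vSA3_0_1, vSA3_1_0, vSA3_1_1, vSA3_2_0, vSA3_2_1, vSA4_0_0, vSA4_0_1, vSA4_0_2, vSA4_1_0, vSA4_1_1, vSA4_1_2, vSA4_2_0, vSA4_2_1, vSA4_2_2, vSA4_3_0, vSA4_3_1, vSA4_3_2, vSA5_0_0, vSA5_0_1, vSA5_0_2, vSA5_0_3, vSA5_1_0, vSA5_1_1, vSA5_1_2, vSA5_1_3, vSA5_2_0, vSA5_2_1, vSA5_2_2, vSA5_2_3, vSA5_3_0, vSA5_3_1, vSA5_3_2, vSA5_3_3, vSA5_4_0, vSA5_4_1, vSA5_4_2, vSA5_4_3, vFS2_0, vFS2_1, vFS3_0, vFS3_1, vFS3_2, vFS4_0, vFS4_1, vFS4_2, vFS4_3]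
  ring

lemma detFinFive' (A : Matrix (Fin 5) (Fin 5) ℂ) : A.det = A 0 0*A 1 1*A 2 2*A 3 3*A 4 4 - A 0 0*A 1 1*A 2 2*A 3 4*A 4 3 - A 0 0*A 1 1*A 2 3*A 3 2*A 4 4 + A 0 0*A 1 1*A 2 3*A 3 4*A 4 2 + A 0 0*A 1 1*A 2 4*A 3 2*A 4 3 - A 0 0*A 1 1*A 2 4*A 3 3*A 4 2 - A 0 0*A 1 2*A 2 1*A 3 3*A 4 4 + A 0 0*A 1 2*A 2 1*A 3 4*A 4 3 + A 0 0*A 1 2*A 2 3*A 3 1*A 4 4 - A 0 0*A 1 2*A 2 3*A 3 4*A 4 1 - A 0 0*A 1 2*A 2 4*A 3 1*A 4 3 + A 0 0*A 1 2*A 2 4*A 3 3*A 4 1 + A 0 0*A 1 3*A 2 1*A 3 2*A 4 4 - A 0 0*A 1 3*A 2 1*A 3 4*A 4 2 - A 0 0*A 1 3*A 2 2*A 3 1*A 4 4 + A 0 0*A 1 3*A 2 2*A 3 4*A 4 1 + A 0 0*A 1 3*A 2 4*A 3 1*A 4 2 - A 0 0*A 1 3*A 2 4*A 3 2*A 4 1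 - A 0 0*A 1 4*A 2 1*A 3 2*A 4 3 + A 0 0*A 1 4*A 2 1*A 3 3*A 4 2 + A 0 0*A 1 4*A 2 2*A 3 1*A 4 3 - A 0 0*A 1 4*A 2 2*A 3 3*A 4 1 - A 0 0*A 1 4*A 2 3*A 3 1*A 4 2 + A 0 0*A 1 4*A 2 3*A 3 2*A 4 1 - A 0 1*A 1 0*A 2 2*A 3 3*A 4 4 + A 0 1*A 1 0*A 2 2*A 3 4*A 4 3 + A 0 1*A 1 0*A 2 3*A 3 2*A 4 4 - A 0 1*A 1 0*A 2 3*A 3 4*A 4 2 - A 0 1*A 1 0*A 2 4*A 3 2*A 4 3 + A 0 1*A 1 0*A 2 4*A 3 3*A 4 2 + A 0 1*A 1 2*A 2 0*A 3 3*A 4 4 - A 0 1*A 1 2*A 2 0*A 3 4*A 4 3 - A 0 1*A 1 2*A 2 3*A 3 0*A 4 4 + A 0 1*A 1 2*A 2 3*A 3 4*A 4 0 + A 0 1*A 1 2*A 2 4*A 3 0*A 4 3 - A 0 1*A 1 2*A 2 4*A 3 3*A 4 0 - A 0 1*A 1 3*A 2 0*A 3 2*A 4 4 + A 0 1*A 1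 3*A 2 0*A 3 4*A 4 2 + A 0 1*A 1 3*A 2 2*A 3 0*A 4 4 - A 0 1*A 1 3*A 2 2*A 3 4*A 4 0 - A 0 1*A 1 3*A 2 4*A 3 0*A 4 2 + A 0 1*A 1 3*A 2 4*A 3 2*A 4 0 + A 0 1*A 1 4*A 2 0*A 3 2*A 4 3 - A 0 1*A 1 4*A 2 0*A 3 3*A 4 2 - A 0 1*A 1 4*A 2 2*A 3 0*A 4 3 + A 0 1*A 1 4*A 2 2*A 3 3*A 4 0 + A 0 1*A 1 4*A 2 3*A 3 0*A 4 2 - A 0 1*A 1 4*A 2 3*A 3 2*A 4 0 + A 0 2*A 1 0*A 2 1*A 3 3*A 4 4 - A 0 2*A 1 0*A 2 1*A 3 4*A 4 3 - A 0 2*A 1 0*A 2 3*A 3 1*A 4 4 + A 0 2*A 1 0*A 2 3*A 3 4*A 4 1 + A 0 2*A 1 0*A 2 4*A 3 1*A 4 3 - A 0 2*A 1 0*A 2 4*A 3 3*A 4 1 - A 0 2*A 1 1*A 2 0*A 3 3*A 4 4 + A 0 2*A 1 1*A 2 0*A 3 4*A 4 3 + A 0 2*A 1 1*A 2 3*A 3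 0*A 4 4 - A 0 2*A 1 1*A 2 3*A 3 4*A 4 0 - A 0 2*A 1 1*A 2 4*A 3 0*A 4 3 + A 0 2*A 1 1*A 2 4*A 3 3*A 4 0 + A 0 2*A 1 3*A 2 0*A 3 1*A 4 4 - A 0 2*A 1 3*A 2 0*A 3 4*A 4 1 - A 0 2*A 1 3*A 2 1*A 3 0*A 4 4 + A 0 2*A 1 3*A 2 1*A 3 4*A 4 0 + A 0 2*A 1 3*A 2 4*A 3 0*A 4 1 - A 0 2*A 1 3*A 2 4*A 3 1*A 4 0 - A 0 2*A 1 4*A 2 0*A 3 1*A 4 3 + A 0 2*A 1 4*A 2 0*A 3 3*A 4 1 + A 0 2*A 1 4*A 2 1*A 3 0*A 4 3 - A 0 2*A 1 4*A 2 1*A 3 3*A 4 0 - A 0 2*A 1 4*A 2 3*A 3 0*A 4 1 + A 0 2*A 1 4*A 2 3*A 3 1*A 4 0 - A 0 3*A 1 0*A 2 1*A 3 2*A 4 4 + A 0 3*A 1 0*A 2 1*A 3 4*A 4 2 + A 0 3*A 1 0*A 2 2*A 3 1*A 4 4 - A 0 3*A 1 0*A 2 2*A 3 4*A 4 1 - A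 0 3*A 1 0*A 2 4*A 3 1*A 4 2 + A 0 3*A 1 0*A 2 4*A 3 2*A 4 1 + A 0 3*A 1 1*A 2 0*A 3 2*A 4 4 - A 0 3*A 1 1*A 2 0*A 3 4*A 4 2 - A 0 3*A 1 1*A 2 2*A 3 0*A 4 4 + A 0 3*A 1 1*A 2 2*A 3 4*A 4 0 + A 0 3*A 1 1*A 2 4*A 3 0*A 4 2 - A 0 3*A 1 1*A 2 4*A 3 2*A 4 0 - A 0 3*A 1 2*A 2 0*A 3 1*A 4 4 + A 0 3*A 1 2*A 2 0*A 3 4*A 4 1 + A 0 3*A 1 2*A 2 1*A 3 0*A 4 4 - A 0 3*A 1 2*A 2 1*A 3 4*A 4 0 - A 0 3*A 1 2*A 2 4*A 3 0*A 4 1 + A 0 3*A 1 2*A 2 4*A 3 1*A 4 0 + A 0 3*A 1 4*A 2 0*A 3 1*A 4 2 - A 0 3*A 1 4*A 2 0*A 3 2*A 4 1 - A 0 3*A 1 4*A 2 1*A 3 0*A 4 2 + A 0 3*A 1 4*A 2 1*A 3 2*A 4 0 + A 0 3*A 1 4*A 2 2*A 3 0*A 4 1 - A 0 3*A 1 4*A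 2 2*A 3 1*A 4 0 + A 0 4*A 1 0*A 2 1*A 3 2*A 4 3 - A 0 4*A 1 0*A 2 1*A 3 3*A 4 2 - A 0 4*A 1 0*A 2 2*A 3 1*A 4 3 + A 0 4*A 1 0*A 2 2*A 3 3*A 4 1 + A 0 4*A 1 0*A 2 3*A 3 1*A 4 2 - A 0 4*A 1 0*A 2 3*A 3 2*A 4 1 - A 0 4*A 1 1*A 2 0*A 3 2*A 4 3 + A 0 4*A 1 1*A 2 0*A 3 3*A 4 2 + A 0 4*A 1 1*A 2 2*A 3 0*A 4 3 - A 0 4*A 1 1*A 2 2*A 3 3*A 4 0 - A 0 4*A 1 1*A 2 3*A 3 0*A 4 2 + A 0 4*A 1 1*A 2 3*A 3 2*A 4 0 + A 0 4*A 1 2*A 2 0*A 3 1*A 4 3 - A 0 4*A 1 2*A 2 0*A 3 3*A 4 1 - A 0 4*A 1 2*A 2 1*A 3 0*A 4 3 + A 0 4*A 1 2*A 2 1*A 3 3*A 4 0 + A 0 4*A 1 2*A 2 3*A 3 0*A 4 1 - A 0 4*A 1 2*A 2 3*A 3 1*A 4 0 - A 0 4*A 1 3*A 2 0*A 3 1*A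 4 2 + A 0 4*A 1 3*A 2 0*A 3 2*A 4 1 + A 0 4*A 1 3*A 2 1*A 3 0*A 4 2 - A 0 4*A 1 3*A 2 1*A 3 2*A 4 0 - A 0 4*A 1 3*A 2 2*A 3 0*A 4 1 + A 0 4*A 1 3*A 2 2*A 3 1*A 4 0 := by
  rw [Matrix.det_succ_row_zero]
  simp [Fin.sum_univ_succ, detFinFour', Matrix.submatrix_apply, vSA3_0_0, vSA3_0_1, vSA3_1_0, vSA3_1_1, vSA3_2_0, vSA3_2_1, vSA4_0_0, vSA4_0_1, vSA4_0_2, vSA4_1_0, vSA4_1_1, vSA4_1_2, vSA4_2_0, vSA4_2_1, vSA4_2_2, vSA4_3_0, vSA4_3_1, vSA4_3_2, vSA5_0_0, vSA5_0_1, vSA5_0_2, vSA5_0_3, vSA5_1_0, vSA5_1_1, vSA5_1_2, vSA5_1_3, vSA5_2_0, vSA5_2_1, vSA5_2_2, vSA5_2_3, vSA5_3_0, vSA5_3_1, vSA5_3_2, vSA5_3_3, vSA5_4_0, vSA5_4_1, vSA5_4_2, vSA5_4_3, vFS2_0, vFS2_1, vFS3_0, vFS3_1, vFS3_2, vFS4_0,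 vFS4_1, vFS4_2, vFS4_3]
  ring

lemma fv0 : ((0:Fin 5):ℕ) = 0 := rfl
lemma fv1 : ((1:Fin 5):ℕ) = 1 := rfl
lemma fv2 : ((2:Fin 5):ℕ) = 2 := rfl
lemma fv3 : ((3:Fin 5):ℕ) = 3 := rfl
lemma fv4 : ((4:Fin 5):ℕ) = 4 := rfl

lemma vm_det (z : ℂ) : (verlindeMatrix 5 z).det =
    11147673600 * (z+1)^4 *
      (762*(z+1)^8 + 2480*(z+1)^6 + 4116*(z+1)^4 + 4320*(z+1)^2 + 2497) := by
  rw [detFinFive']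
  simp only [verlindeMatrix, fv0, fv1, fv2, fv3, fv4, Nat.cast_ofNat, Nat.cast_one,
    reduceIte, Nat.reduceEqDiff, one_ne_zero, if_false, if_true]
  ring

lemma Q_five (z : ℂ) : Q 5 z =
    (1/14175) * (z+1)^4 *
      (762*(z+1)^8 + 2480*(z+1)^6 + 4116*(z+1)^4 + 4320*(z+1)^2 + 2497) := by
  rw [Q, vm_det]
  rw [show Finset.Icc 1 5 = ({1,2,3,4,5} : Finset ℕ) by rfl]
  norm_num [Nat.factorial]
  ring

theorem genus_five_canonical_strip :
    ∀ z : ℂ, Q 5 z = 0 → z.re ∈ Set.Icc (-2 : ℝ) 0 := by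
  intro z hz
  rw [Q_five] at hz
  set t : ℂ := z + 1 with ht
  have hx : z.re = t.re - 1 := by simp [ht]
  rcases mul_eq_zero.1 hz with h | hoct
  · rcases mul_eq_zero.1 h with h' | h4
    · norm_num at h'
    · have ht0 : t = 0 := pow_eq_zero_iff (by norm_num) |>.1 h4
      have hz1 : z = -1 := by linear_combination ht0
      simp [hz1]
  · set v : ℂ := t^2 + 1 with hv
    have hveq : (762:ℂ) * v^4 = 568*v^3 - 1248*v^2 - 480*v - 575 := by
      rw [hv]; linear_combination hoct
    have habs : ‖v‖ ≤ 2 := by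
      by_contra hgt
      push_neg at hgt
      set m := ‖v‖ with hm
      have hm0 : 2 < m := hgt
      have h1 : (762:ℝ) * m^4 ≤ 568*m^3 + 1248*m^2 + 480*m + 575 := by
        have habsq := congrArg norm hveq
        rw [norm_mul, norm_pow] at habsq
        have h2 : ‖(762:ℂ)‖ = 762 := by norm_num
        calc (762:ℝ) * m^4 = ‖(568*v^3 - 1248*v^2 - 480*v - 575 : ℂ)‖ := by
              rw [← habsq, h2]
          _ ≤ ‖(568*v^3 : ℂ)‖ + ‖(1248*v^2 : ℂ)‖ + ‖(480*v : ℂ)‖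
                + ‖(575 : ℂ)‖ := by
              have a1 := norm_sub_le (568*v^3 - 1248*v^2 - 480*v) (575:ℂ)
              have a2 := norm_sub_le (568*v^3 - 1248*v^2) (480*v)
              have a3 := norm_sub_le (568*v^3) (1248*v^2)
              linarith
          _ = 568*m^3 + 1248*m^2 + 480*m + 575 := by
              simp only [norm_mul, norm_pow, hm]
              norm_num
      have hp0 : (0:ℝ) < m := by linarith
      have hd : (0:ℝ) ≤ m - 2 := by linarith
      have e1 : (0:ℝ) ≤ m^3*(m-2) := mul_nonneg (by positivity) hd
      have e2 : (0:ℝ) ≤ m^2*(m-2) := mul_nonneg (by positivity) hd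
      have e3 : (0:ℝ) ≤ m*(m-2) := mul_nonneg (by positivity) hd
      nlinarith [e1, e2, e3, hd, h1]
    have hns : v.re^2 + v.im^2 ≤ 4 := by
      have h1 : ‖v‖ ^ 2 ≤ 4 := by nlinarith [norm_nonneg v]
      rw [Complex.sq_norm, Complex.normSq_apply] at h1
      nlinarith [h1]
    have hvre : v.re = t.re^2 - t.im^2 + 1 := by
      rw [hv]; simp [pow_two, Complex.mul_re]
    have hvim : v.im = 2 * t.re * t.im := by
      rw [hv]; simp [pow_two, Complex.mul_im]; ring
    have hkey : t.re^2 ≤ 1 := by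
      by_contra hgt
      push_neg at hgt
      rw [hvre, hvim] at hns
      have hp : (0:ℝ) < (t.re^2 - 1) * (t.re^2 + 2*t.im^2 + 1) :=
        mul_pos (by linarith) (by positivity)
      nlinarith [hns, hgt, sq_nonneg t.im, hp]
    have h1 : -1 ≤ t.re := by nlinarith [hkey]
    have h2 : t.re ≤ 1 := by nlinarith [hkey]
    exact ⟨by linarith, by linarith⟩
end
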